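/- With the notation of the previous entropy identity, if additionally ∫_Γ l(g) dθ_T ≤ N then R(μ‖ν) ≤ N/m + 1 − θ_T(Γ)/m + log(θ_T(Γ)/m). -/

import Mathlib

open MeasureTheory
open scoped ENNReal

theorem stmt13 {Z : Type*} [MeasurableSpace Z] (θT : Measure Z)
    (Γ : Set Z) (hΓm : MeasurableSet Γ) (hΓ0 : θT Γ ≠ 0) (hΓtop : θT Γ ≠ ⊤)
    (g : Z → ℝ) (hg : Measurable g) (hgnn : ∀ x, 0 ≤ g x)
    (N m : ℝ) (hm : 0 < m)
    (hmval : ∫ x in Γ, g x ∂θT = m)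
    (hN : ∫ x in Γ, (g x * Real.log (g x) - g x + 1) ∂θT ≤ N)
    (hint1 : Integrable g (θT.restrict Γ))
    (hint2 : Integrable (fun x => g x * Real.log (g x)) (θT.restrict Γ)) :
    ∫ x, Real.log ((θT Γ).toReal / m * g x)
        ∂((θT.restrict Γ).withDensity fun x => ENNReal.ofReal (g x / m)) ≤
      N / m + 1 - (θT Γ).toReal / m + Real.log ((θT Γ).toReal / m) := by
  set c := (θT Γ).toReal with hc
  have hcpos : 0 < c := ENNReal.toReal_pos hΓ0 hΓtop
  haveI : IsFiniteMeasure (θT.restrict Γ) := by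
    constructor
    rw [Measure.restrict_apply_univ]
    exact hΓtop.lt_top
  have hdens : (fun x => ENNReal.ofReal (g x / m))
      = fun x => ((g x / m).toNNReal : ℝ≥0∞) := rfl
  rw [hdens, integral_withDensity_eq_integral_smul
    ((hg.div_const m).real_toNNReal) _]
  have key : ∀ x, (Real.toNNReal (g x / m)) • Real.log (c / m * g x)
      = (1 / m) * (Real.log (c / m) * g x + g x * Real.log (g x)) := by
    intro x
    rw [NNReal.smul_def, Real.coe_toNNReal _ (div_nonneg (hgnn x) hm.le)]
    rcases eq_or_lt_of_le (hgnn x) with h0 | hpos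
    · simp [← h0]
    · rw [Real.log_mul (by positivity) (ne_of_gt hpos)]
      field_simp
      rw [smul_eq_mul, ← mul_assoc, mul_div_assoc', mul_comm m (g x), mul_div_assoc,
        div_self hm.ne', mul_one]
  simp only [key]
  have hI1 : Integrable (fun x => Real.log (c / m) * g x) (θT.restrict Γ) :=
    hint1.const_mul _
  have hsum : ∫ x in Γ, (1 / m) * (Real.log (c / m) * g x + g x * Real.log (g x)) ∂θT
      = (1 / m) * (Real.log (c / m) * m + ∫ x in Γ, g x * Real.log (g x) ∂θT) := by
    rw [integral_const_mul, integral_add hI1 hint2, integral_const_mul, hmval]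
  rw [hsum]
  -- bound ∫ g log g
  have hone : ∫ x in Γ, (1 : ℝ) ∂θT = c := by
    simp [Measure.restrict_apply_univ, hc]
    rfl
  have hdecomp : ∫ x in Γ, (g x * Real.log (g x) - g x + 1) ∂θT
      = (∫ x in Γ, g x * Real.log (g x) ∂θT) - m + c := by
    have hint3 : Integrable (fun x => g x * Real.log (g x) - g x) (θT.restrict Γ) :=
      hint2.sub hint1
    rw [integral_add hint3 (integrable_const 1),
      integral_sub hint2 hint1, hmval, hone]
  have hIle : (∫ x in Γ, g x * Real.log (g x) ∂θT) ≤ N + m - c := by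
    rw [hdecomp] at hN; linarith
  have hmne : m ≠ 0 := hm.ne'
  have : (1 / m) * (Real.log (c / m) * m + ∫ x in Γ, g x * Real.log (g x) ∂θT)
      ≤ (1 / m) * (Real.log (c / m) * m + (N + m - c)) := by
    apply mul_le_mul_of_nonneg_left (by linarith) (by positivity)
  refine this.trans (le_of_eq ?_)
  field_simp
  ring
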